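/- Let γ ∈ ℝ, B₁ ∈ ℝ with B₁ ≠ 0, and B₂ ∈ ℝ with |B₂| > 1. Then tanh(γr) + B₂ ≠ 0 for all r ∈ ℝ, and the function Z(r) = B₁/(tanh(γr) + B₂) satisfies, for all r ∈ ℝ: (Z′(r))² = (γ²/B₁²)·((1 − B₂²)·Z(r)² + 2B₁B₂·Z(r) − B₁²)². -/

import Mathlib

/-- The kink-type profile Z(r) = B₁/(tanh(γr) + B₂). -/
noncomputable def Ztanh (B₁ B₂ γ : ℝ) : ℝ → ℝ := fun r => B₁ / (Real.tanh (γ * r) + B₂)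

lemma hasDerivAt_tanh' (x : ℝ) : HasDerivAt Real.tanh (1 - Real.tanh x ^ 2) x := by
  have h : Real.tanh = fun y => Real.sinh y / Real.cosh y := by
    funext y; exact Real.tanh_eq_sinh_div_cosh y
  rw [h]
  have := (Real.hasDerivAt_sinh x).div (Real.hasDerivAt_cosh x) (Real.cosh_pos x).ne'
  refine this.congr_deriv ?_
  beta_reduce
  have hc := (Real.cosh_pos x).ne'
  have hsq : Real.cosh x ^ 2 = 1 + Real.sinh x ^ 2 := by
    rw [Real.cosh_sq]; ring
  field_simp

lemma abs_tanh_lt_one (x : ℝ) : |Real.tanh x| < 1 := by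
  rw [abs_lt, Real.tanh_eq_sinh_div_cosh]
  have hc := Real.cosh_pos x
  have hsq : Real.cosh x ^ 2 = 1 + Real.sinh x ^ 2 := by rw [Real.cosh_sq]; ring
  constructor
  · rw [lt_div_iff₀ hc]; nlinarith
  · rw [div_lt_iff₀ hc]; nlinarith

theorem stmt13 (γ B₁ B₂ : ℝ) (hB₁ : B₁ ≠ 0) (hB₂ : 1 < |B₂|) :
    (∀ r : ℝ, Real.tanh (γ * r) + B₂ ≠ 0) ∧
    (∀ r : ℝ, (deriv (Ztanh B₁ B₂ γ) r) ^ 2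
      = (γ ^ 2 / B₁ ^ 2) *
        ((1 - B₂ ^ 2) * (Ztanh B₁ B₂ γ r) ^ 2 + 2 * B₁ * B₂ * Ztanh B₁ B₂ γ r - B₁ ^ 2) ^ 2) := by
  have hne : ∀ r : ℝ, Real.tanh (γ * r) + B₂ ≠ 0 := by
    intro r
    have := abs_tanh_lt_one (γ * r)
    intro h
    have : B₂ = -Real.tanh (γ * r) := by linarith
    rw [this, abs_neg] at hB₂
    linarith [abs_tanh_lt_one (γ * r)]
  refine ⟨hne, fun r => ?_⟩
  set t := Real.tanh (γ * r) with ht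
  have hD : t + B₂ ≠ 0 := hne r
  have hdt : HasDerivAt (fun s => Real.tanh (γ * s) + B₂) (γ * (1 - t ^ 2)) r := by
    have h1 : HasDerivAt (fun s : ℝ => γ * s) γ r := by
      simpa using (hasDerivAt_id r).const_mul γ
    have := ((hasDerivAt_tanh' (γ * r)).comp r h1).add_const B₂
    simpa [mul_comm] using this
  have hZ : HasDerivAt (Ztanh B₁ B₂ γ)
      ((0 * (t + B₂) - B₁ * (γ * (1 - t ^ 2))) / (t + B₂) ^ 2) r :=
    (hasDerivAt_const r B₁).div hdt hD
  rw [hZ.deriv]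
  have h1 : |t| < 1 := abs_tanh_lt_one (γ * r)
  unfold Ztanh
  rw [← ht]
  field_simp
  ring
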